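/- arXiv:math/0210051 — 2 statements merged into one kernel-verified Lean document; each statement's English description precedes it below -/
import Mathlib

section
/- Let P be a generic configuration of n points in the plane with the Orchard relation P ∼ Q iff n(P,Q) ≡ n−3 (mod 2). Then the Orchard relation has at most two equivalence classes; equivalently, for any three distinct points P_i, P_j, P_k, if P_i ≁ P_j and P_j ≁ P_k then P_i ∼ P_k. -/
open scoped Classical

noncomputable section

/-- Orientation determinant of two vectors in the plane. -/
def det2 (u v : ℝ × ℝ) : ℝ := u.1 * v.2 - u.2 * v.1

/-- The line through `A` and `B` separates the points `P` and `Q`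
(they lie in distinct open half-planes determined by the line). -/
def SepLine (A B P Q : ℝ × ℝ) : Prop :=
  det2 (B - A) (P - A) * det2 (B - A) (Q - A) < 0

/-- A finite planar point set is a generic configuration if no three of its
points are collinear. -/
def Generic (C : Finset (ℝ × ℝ)) : Prop :=
  ∀ a ∈ C, ∀ b ∈ C, ∀ c ∈ C, a ≠ b → a ≠ c → b ≠ c →
    ¬ Collinear ℝ ({a, b, c} : Set (ℝ × ℝ))

/-- `nsep C P Q` is the number of lines spanned by (unordered) pairs of points of
`C \ {P,Q}` that separate `P` from `Q`. -/
def nsep (C : Finset (ℝ × ℝ)) (P Q : ℝ × ℝ) : ℕ :=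
  (((C \ {P, Q}).powersetCard 2).filter
    (fun s => ∃ A ∈ s, ∃ B ∈ s, A ≠ B ∧ SepLine A B P Q)).card

/-- The Orchard relation: `P ∼ Q` iff `n(P,Q) ≡ n - 3 (mod 2)` where `n = |C|`. -/
def Orchard (C : Finset (ℝ × ℝ)) (P Q : ℝ × ℝ) : Prop :=
  (nsep C P Q : ℤ) ≡ (C.card : ℤ) - 3 [ZMOD 2]

/-- A configuration is monochromatic if all its points are Orchard-equivalent. -/
def Mono (C : Finset (ℝ × ℝ)) : Prop :=
  ∀ P ∈ C, ∀ Q ∈ C, P ≠ Q → Orchard C P Q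

/-- A configuration is in convex position if each of its points is a vertex of
the convex hull. -/
def ConvexPos (C : Finset (ℝ × ℝ)) : Prop :=
  ∀ P ∈ C, P ∉ convexHull ℝ ((C : Set (ℝ × ℝ)) \ {P})

lemma sepLine_symm_AB {A B P Q : ℝ × ℝ} : SepLine A B P Q ↔ SepLine B A P Q := by
  unfold SepLine
  have : det2 (A - B) (P - B) * det2 (A - B) (Q - B)
       = det2 (B - A) (P - A) * det2 (B - A) (Q - A) := by
    simp only [det2, Prod.fst_sub, Prod.snd_sub]; ring
  rw [this]

lemma collinear_of_det {a b c : ℝ × ℝ} (hab : a ≠ b) (h : det2 (b - a) (c - a) = 0) :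
    Collinear ℝ ({a, b, c} : Set (ℝ × ℝ)) := by
  have hc : ∃ t : ℝ, c = t • (b - a) + a := by
    simp only [det2, Prod.fst_sub, Prod.snd_sub] at h
    by_cases h1 : b.1 - a.1 = 0
    · have h2 : b.2 - a.2 ≠ 0 := by
        intro h2; exact hab (Prod.ext (by linarith) (by linarith)).symm
      refine ⟨(c.2 - a.2) / (b.2 - a.2), ?_⟩
      have hc1 : c.1 = a.1 := by
        have : (b.2 - a.2) * (c.1 - a.1) = 0 := by rw [h1, zero_mul, zero_sub, neg_eq_zero] at h; exact h
        rcases mul_eq_zero.mp this with h'|h'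
        · exact absurd h' h2
        · linarith
      apply Prod.ext
      · simp only [Prod.fst_add, Prod.smul_fst, Prod.fst_sub, smul_eq_mul, h1, hc1]
        ring
      · simp only [Prod.snd_add, Prod.smul_snd, Prod.snd_sub, smul_eq_mul]
        field_simp
        ring
    · refine ⟨(c.1 - a.1) / (b.1 - a.1), ?_⟩
      apply Prod.ext
      · simp only [Prod.fst_add, Prod.smul_fst, Prod.fst_sub, smul_eq_mul]
        field_simp
        ring
      · simp only [Prod.snd_add, Prod.smul_snd, Prod.snd_sub, smul_eq_mul]
        field_simp
        nlinarith [h]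
  rw [collinear_iff_of_mem (show a ∈ ({a,b,c} : Set (ℝ×ℝ)) by simp)]
  refine ⟨b - a, ?_⟩
  rintro p (rfl | rfl | rfl)
  · exact ⟨0, by simp⟩
  · exact ⟨1, by simp⟩
  · exact hc

lemma even_signs {x y z : ℝ} (hx : x ≠ 0) (hy : y ≠ 0) (hz : z ≠ 0) :
    ((if x*y < 0 then 1 else 0) + (if y*z < 0 then 1 else 0) + (if x*z < 0 then 1 else 0)) % 2 = 0 := by
  rcases hx.lt_or_gt with hx|hx <;> rcases hy.lt_or_gt with hy|hy <;> rcases hz.lt_or_gt with hz|hz <;>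
    simp [mul_neg_iff, hx, hy, hz, hx.asymm, hy.asymm, hz.asymm]

lemma odd_signs {x y z : ℝ} (hx : x ≠ 0) (hy : y ≠ 0) (hz : z ≠ 0) :
    ((if x*y < 0 then 1 else 0) + (if 0 < x*z then 1 else 0) + (if y*z < 0 then 1 else 0)) % 2 = 1 := by
  rcases hx.lt_or_gt with hx|hx <;> rcases hy.lt_or_gt with hy|hy <;> rcases hz.lt_or_gt with hz|hz <;>
    simp [mul_neg_iff, mul_pos_iff, hx, hy, hz, hx.asymm, hy.asymm, hz.asymm]

-- even per pair: line AB vs the three pairs of {P,Q,R}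
lemma even_per_pair {A B P Q R : ℝ × ℝ}
    (hx : det2 (B-A) (P-A) ≠ 0) (hy : det2 (B-A) (Q-A) ≠ 0) (hz : det2 (B-A) (R-A) ≠ 0) :
    ((if SepLine A B P Q then 1 else 0) + (if SepLine A B Q R then 1 else 0)
      + (if SepLine A B P R then 1 else 0)) % 2 = 0 := by
  unfold SepLine
  exact even_signs hx hy hz

-- odd per point A: the three lines AP, AQ, AR vs the opposite pairs
lemma odd_per_point {A P Q R : ℝ × ℝ}
    (hx : det2 (P-A) (Q-A) ≠ 0) (hy : det2 (P-A) (R-A) ≠ 0) (hz : det2 (Q-A) (R-A) ≠ 0) :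
    ((if SepLine P A Q R then 1 else 0) + (if SepLine Q A P R then 1 else 0)
      + (if SepLine R A P Q then 1 else 0)) % 2 = 1 := by
  set x := det2 (P-A) (Q-A) with hxd
  set y := det2 (P-A) (R-A) with hyd
  set z := det2 (Q-A) (R-A) with hzd
  have e1 : SepLine P A Q R ↔ x*y < 0 := by
    unfold SepLine
    have : det2 (A-P) (Q-P) * det2 (A-P) (R-P) = x*y := by
      simp only [hxd, hyd, det2, Prod.fst_sub, Prod.snd_sub]; ring
    rw [this]
  have e2 : SepLine Q A P R ↔ 0 < x*z := by
    unfold SepLine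
    have : det2 (A-Q) (P-Q) * det2 (A-Q) (R-Q) = -(x*z) := by
      simp only [hxd, hzd, det2, Prod.fst_sub, Prod.snd_sub]; ring
    rw [this]
    constructor <;> intro h <;> linarith
  have e3 : SepLine R A P Q ↔ y*z < 0 := by
    unfold SepLine
    have : det2 (A-R) (P-R) * det2 (A-R) (Q-R) = y*z := by
      simp only [hyd, hzd, det2, Prod.fst_sub, Prod.snd_sub]; ring
    rw [this]
  simp only [e1, e2, e3]
  exact odd_signs hx hy hz

lemma pair_pred {P Q a b : ℝ × ℝ} (hab : a ≠ b) :
    (∃ A ∈ ({a,b} : Finset (ℝ×ℝ)), ∃ B ∈ ({a,b} : Finset (ℝ×ℝ)), A ≠ B ∧ SepLine A B P Q)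
    ↔ SepLine a b P Q := by
  constructor
  · rintro ⟨A, hA, B, hB, hAB, h⟩
    simp only [Finset.mem_insert, Finset.mem_singleton] at hA hB
    rcases hA with rfl|rfl <;> rcases hB with rfl|rfl
    · exact absurd rfl hAB
    · exact h
    · exact sepLine_symm_AB.mpr h
    · exact absurd rfl hAB
  · intro h
    exact ⟨a, by simp, b, by simp, hab, h⟩

def Ncount (E : Finset (ℝ×ℝ)) (P Q : ℝ×ℝ) : ℕ :=
  ((E.powersetCard 2).filter (fun s => ∃ A ∈ s, ∃ B ∈ s, A ≠ B ∧ SepLine A B P Q)).card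

lemma Ncount_insert {E : Finset (ℝ×ℝ)} {R P Q : ℝ×ℝ} (hR : R ∉ E) :
    Ncount (insert R E) P Q = Ncount E P Q + (E.filter (fun A => SepLine R A P Q)).card := by
  unfold Ncount
  rw [Finset.powersetCard_succ_insert hR, Finset.filter_union, Finset.card_union_of_disjoint]
  · congr 1
    rw [Finset.powersetCard_one]
    have himg : Finset.image (insert R) (E.map ⟨singleton, fun _ _ => by simp⟩)
        = E.image (fun A => ({R, A} : Finset (ℝ×ℝ))) := by
      rw [Finset.map_eq_image, Finset.image_image]
      rfl
    rw [himg, Finset.filter_image, Finset.card_image_of_injOn]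
    · apply congrArg
      apply Finset.filter_congr
      intro A hA
      have hAR : R ≠ A := fun h => hR (h ▸ hA)
      simpa using pair_pred (P := P) (Q := Q) hAR
    · intro A hA B hB hAB
      have hAmem : A ∈ E := (Finset.mem_filter.mp (Finset.mem_coe.mp hA)).1
      have hAR : A ≠ R := fun h => hR (h ▸ hAmem)
      have hAB' : ({R, A} : Finset (ℝ×ℝ)) = {R, B} := hAB
      have : A ∈ ({R, B} : Finset (ℝ×ℝ)) := by rw [← hAB']; simp
      simp only [Finset.mem_insert, Finset.mem_singleton] at this
      rcases this with h|h
      · exact absurd h hAR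
      · exact h
  · rw [Finset.disjoint_left]
    intro s hs hs'
    simp only [Finset.mem_filter, Finset.mem_powersetCard] at hs hs'
    have h1 : R ∉ s := fun h => hR (hs.1.1 h)
    obtain ⟨t, ht, rfl⟩ := Finset.mem_image.mp hs'.1
    exact h1 (Finset.mem_insert_self R t)

lemma det2_ne {C : Finset (ℝ×ℝ)} (hC : Generic C) {a b c : ℝ×ℝ}
    (ha : a ∈ C) (hb : b ∈ C) (hc : c ∈ C)
    (hab : a ≠ b) (hac : a ≠ c) (hbc : b ≠ c) : det2 (b - a) (c - a) ≠ 0 :=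
  fun h => hC a ha b hb c hc hab hac hbc (collinear_of_det hab h)

lemma key_parity {C : Finset (ℝ×ℝ)} (hC : Generic C) {P Q R : ℝ×ℝ}
    (hP : P ∈ C) (hQ : Q ∈ C) (hR : R ∈ C)
    (hPQ : P ≠ Q) (hPR : P ≠ R) (hQR : Q ≠ R) :
    (nsep C P Q + nsep C Q R + nsep C P R) % 2 = (C.card - 3) % 2 := by
  classical
  set D : Finset (ℝ×ℝ) := C \ {P, Q, R} with hD
  have hmemD : ∀ {x}, x ∈ D ↔ x ∈ C ∧ x ≠ P ∧ x ≠ Q ∧ x ≠ R := by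
    intro x; simp [hD, Finset.mem_sdiff, not_or, and_assoc]
  have hRD : R ∉ D := fun h => (hmemD.mp h).2.2.2 rfl
  have hPD : P ∉ D := fun h => (hmemD.mp h).2.1 rfl
  have hQD : Q ∉ D := fun h => (hmemD.mp h).2.2.1 rfl
  have e1 : C \ {P, Q} = insert R D := by
    ext x
    by_cases hx : x = R <;>
      simp [hD, Finset.mem_sdiff, Finset.mem_insert, hx, hR, hQR.symm, hPR.symm, not_or] <;>
      tauto
  have e2 : C \ {Q, R} = insert P D := by
    ext x
    by_cases hx : x = P <;>
      simp [hD, Finset.mem_sdiff, Finset.mem_insert, hx, hP, hPQ, hPR, not_or] <;>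
      tauto
  have e3 : C \ {P, R} = insert Q D := by
    ext x
    by_cases hx : x = Q <;>
      simp [hD, Finset.mem_sdiff, Finset.mem_insert, hx, hQ, hPQ.symm, hQR, not_or] <;>
      tauto
  have n1 : nsep C P Q = Ncount D P Q + (D.filter (fun A => SepLine R A P Q)).card := by
    show Ncount (C \ {P,Q}) P Q = _
    rw [e1, Ncount_insert hRD]
  have n2 : nsep C Q R = Ncount D Q R + (D.filter (fun A => SepLine P A Q R)).card := by
    show Ncount (C \ {Q,R}) Q R = _
    rw [e2, Ncount_insert hPD]
  have n3 : nsep C P R = Ncount D P R + (D.filter (fun A => SepLine Q A P R)).card := by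
    show Ncount (C \ {P,R}) P R = _
    rw [e3, Ncount_insert hQD]
  -- even part
  have heven : (Ncount D P Q + Ncount D Q R + Ncount D P R) % 2 = 0 := by
    unfold Ncount
    rw [Finset.card_filter, Finset.card_filter, Finset.card_filter,
      ← Finset.sum_add_distrib, ← Finset.sum_add_distrib, Finset.sum_nat_mod]
    have : ∀ s ∈ D.powersetCard 2,
        ((if (∃ A ∈ s, ∃ B ∈ s, A ≠ B ∧ SepLine A B P Q) then 1 else 0)
          + (if (∃ A ∈ s, ∃ B ∈ s, A ≠ B ∧ SepLine A B Q R) then 1 else 0)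
          + (if (∃ A ∈ s, ∃ B ∈ s, A ≠ B ∧ SepLine A B P R) then 1 else 0)) % 2 = 0 := by
      intro s hs
      rw [Finset.mem_powersetCard] at hs
      obtain ⟨a, b, hab, rfl⟩ := Finset.card_eq_two.mp hs.2
      have haD : a ∈ D := hs.1 (by simp)
      have hbD : b ∈ D := hs.1 (by simp)
      obtain ⟨haC, haP, haQ, haR⟩ := hmemD.mp haD
      obtain ⟨hbC, hbP, hbQ, hbR⟩ := hmemD.mp hbD
      simp only [pair_pred hab]
      exact even_per_pair (det2_ne hC haC hbC hP hab haP hbP)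
        (det2_ne hC haC hbC hQ hab haQ hbQ) (det2_ne hC haC hbC hR hab haR hbR)
    rw [Finset.sum_congr rfl this]
    simp
  -- odd part
  have hodd : ((D.filter (fun A => SepLine R A P Q)).card
      + (D.filter (fun A => SepLine P A Q R)).card
      + (D.filter (fun A => SepLine Q A P R)).card) % 2 = D.card % 2 := by
    rw [Finset.card_filter, Finset.card_filter, Finset.card_filter,
      ← Finset.sum_add_distrib, ← Finset.sum_add_distrib, Finset.sum_nat_mod]
    have : ∀ A ∈ D,
        ((if SepLine R A P Q then 1 else 0) + (if SepLine P A Q R then 1 else 0)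
          + (if SepLine Q A P R then 1 else 0)) % 2 = 1 % 2 := by
      intro A hA
      obtain ⟨hAC, hAP, hAQ, hAR⟩ := hmemD.mp hA
      have := odd_per_point (A := A) (P := P) (Q := Q) (R := R)
        (det2_ne hC hAC hP hQ hAP hAQ hPQ)
        (det2_ne hC hAC hP hR hAP hAR hPR)
        (det2_ne hC hAC hQ hR hAQ hAR hQR)
      omega
    rw [Finset.sum_congr rfl this, ← Finset.sum_nat_mod]
    rw [← Finset.card_eq_sum_ones]
  have hDcard : D.card = C.card - 3 := by
    rw [hD, Finset.card_sdiff_of_subset]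
    · congr 1
      rw [Finset.card_insert_of_notMem (by simp [hPQ, hPR]),
        Finset.card_insert_of_notMem (by simp [hQR]), Finset.card_singleton]
    · intro x hx
      simp only [Finset.mem_insert, Finset.mem_singleton] at hx
      rcases hx with rfl|rfl|rfl <;> assumption
  rw [n1, n2, n3]
  omega

/-- The Orchard relation has at most two classes: if `P_i ≁ P_j` and
`P_j ≁ P_k` then `P_i ∼ P_k`. -/
theorem orchard_at_most_two_classes (C : Finset (ℝ × ℝ)) (hC : Generic C)
    (Pi Pj Pk : ℝ × ℝ) (hi : Pi ∈ C) (hj : Pj ∈ C) (hk : Pk ∈ C)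
    (hij : Pi ≠ Pj) (hik : Pi ≠ Pk) (hjk : Pj ≠ Pk)
    (h1 : ¬ Orchard C Pi Pj) (h2 : ¬ Orchard C Pj Pk) :
    Orchard C Pi Pk := by
  have key := key_parity hC hi hj hk hij hik hjk
  have hcard : 3 ≤ C.card := by
    have hsub : ({Pi, Pj, Pk} : Finset (ℝ×ℝ)) ⊆ C := by
      intro x hx
      simp only [Finset.mem_insert, Finset.mem_singleton] at hx
      rcases hx with rfl|rfl|rfl <;> assumption
    calc 3 = ({Pi, Pj, Pk} : Finset (ℝ×ℝ)).card := by
            rw [Finset.card_insert_of_notMem (by simp [hij, hik]),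
              Finset.card_insert_of_notMem (by simp [hjk]), Finset.card_singleton]
      _ ≤ C.card := Finset.card_le_card hsub
  unfold Orchard Int.ModEq at h1 h2 ⊢
  omega
end
end

section
/- For any three distinct points P_i, P_j, P_k of a generic configuration of n points in the plane, n(P_i,P_j) + n(P_j,P_k) + n(P_i,P_k) ≡ (n−3) (mod 2); in particular the number of pairs among {P_i,P_j,P_k} for which n ≢ n−3 (mod 2) is even. -/
open scoped Classical

noncomputable section

lemma det2_swap (u v : ℝ × ℝ) : det2 u v = - det2 v u := by simp [det2]; ring

lemma det2_shift (A B P : ℝ × ℝ) : det2 (B - A) (P - A) = - det2 (A - B) (P - B) := by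
  simp [det2, Prod.fst_sub, Prod.snd_sub]; ring

lemma sepLine_comm (A B P Q : ℝ × ℝ) : SepLine A B P Q ↔ SepLine B A P Q := by
  unfold SepLine
  rw [det2_shift A B P, det2_shift A B Q]
  constructor <;> intro h <;> nlinarith [h]

lemma collinear_of_det2_eq_zero (a b c : ℝ × ℝ) (h : det2 (b - a) (c - a) = 0) :
    Collinear ℝ ({a, b, c} : Set (ℝ × ℝ)) := by
  by_cases hba : b - a = 0
  · have hab : b = a := by rwa [sub_eq_zero] at hba
    rw [hab, show ({a, a, c} : Set (ℝ × ℝ)) = {a, c} by simp]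
    exact collinear_pair ℝ a c
  · have h1 : (b - a).1 ≠ 0 ∨ (b - a).2 ≠ 0 := by
      by_contra hc
      push_neg at hc
      exact hba (Prod.ext hc.1 hc.2)
    simp only [det2, Prod.fst_sub, Prod.snd_sub] at h h1
    apply (collinear_iff_of_mem (Set.mem_insert a _)).2
    refine ⟨b - a, ?_⟩
    intro p hp
    rcases hp with rfl | rfl | rfl
    · exact ⟨0, by simp⟩
    · exact ⟨1, by simp⟩
    · rcases h1 with h1 | h1
      · refine ⟨(p.1 - a.1) / (b.1 - a.1), ?_⟩
        rw [Prod.ext_iff]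
        constructor
        · simp [Prod.fst_sub]
          field_simp
          ring
        · simp [Prod.snd_sub]
          field_simp
          linear_combination h
      · refine ⟨(p.2 - a.2) / (b.2 - a.2), ?_⟩
        rw [Prod.ext_iff]
        constructor
        · simp [Prod.fst_sub]
          field_simp
          linear_combination -h
        · simp [Prod.snd_sub]
          field_simp
          ring

lemma det2_ne_zero {C : Finset (ℝ × ℝ)} (hC : Generic C) {a b c : ℝ × ℝ}
    (ha : a ∈ C) (hb : b ∈ C) (hc : c ∈ C) (hab : a ≠ b) (hac : a ≠ c) (hbc : b ≠ c) :
    det2 (b - a) (c - a) ≠ 0 :=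
  fun h => hC a ha b hb c hc hab hac hbc (collinear_of_det2_eq_zero a b c h)

lemma ite_mul_neg (x y : ℝ) (hx : x ≠ 0) (hy : y ≠ 0) :
    (if x * y < 0 then (1 : ZMod 2) else 0) =
      (if x < 0 then 1 else 0) + (if y < 0 then 1 else 0) := by
  rcases hx.lt_or_gt with h | h <;> rcases hy.lt_or_gt with h' | h'
  · simp [not_lt.2 (mul_pos_of_neg_of_neg h h').le, h, h']
    decide
  · simp [mul_neg_of_neg_of_pos h h', h, not_lt.2 h'.le]
  · simp [mul_neg_of_pos_of_neg h h', not_lt.2 h.le, h']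
  · simp [not_lt.2 (mul_pos h h').le, not_lt.2 h.le, not_lt.2 h'.le]

lemma ite_mul_pos (x y : ℝ) (hx : x ≠ 0) (hy : y ≠ 0) :
    (if 0 < x * y then (1 : ZMod 2) else 0) =
      1 + (if x < 0 then 1 else 0) + (if y < 0 then 1 else 0) := by
  rcases hx.lt_or_gt with h | h <;> rcases hy.lt_or_gt with h' | h'
  · simp [mul_pos_of_neg_of_neg h h', h, h']
    decide
  · simp [asymm (mul_neg_of_neg_of_pos h h'), h, not_lt.2 h'.le]
    decide
  · simp [asymm (mul_neg_of_pos_of_neg h h'), not_lt.2 h.le, h']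
    decide
  · simp [mul_pos h h', not_lt.2 h.le, not_lt.2 h'.le]

-- parity lemma A: three nonzero reals, even number of discordant pairs
lemma evenA (u v w : ℝ) (hu : u ≠ 0) (hv : v ≠ 0) (hw : w ≠ 0) :
    ((if u * v < 0 then 1 else 0) + (if v * w < 0 then 1 else 0) +
      (if u * w < 0 then 1 else 0) : ZMod 2) = 0 := by
  rw [ite_mul_neg u v hu hv, ite_mul_neg v w hv hw, ite_mul_neg u w hu hw]
  split_ifs <;> decide

lemma oddB (a b c : ℝ) (ha : a ≠ 0) (hb : b ≠ 0) (hc : c ≠ 0) :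
    ((if 0 < a * c then 1 else 0) + (if 0 < a * b then 1 else 0) +
      (if 0 < b * c then 1 else 0) : ZMod 2) = 1 := by
  rw [ite_mul_pos a c ha hc, ite_mul_pos a b ha hb, ite_mul_pos b c hb hc]
  split_ifs <;> decide


lemma sep2_pair (A B P Q : ℝ × ℝ) (hAB : A ≠ B) :
    (∃ x ∈ (insert A {B} : Finset (ℝ × ℝ)), ∃ y ∈ (insert A {B} : Finset (ℝ × ℝ)),
      x ≠ y ∧ SepLine x y P Q) ↔ SepLine A B P Q := by
  constructor
  · rintro ⟨x, hx, y, hy, hxy, h⟩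
    simp only [Finset.mem_insert, Finset.mem_singleton] at hx hy
    rcases hx with rfl | rfl <;> rcases hy with rfl | rfl
    · exact absurd rfl hxy
    · exact h
    · exact (sepLine_comm _ _ P Q).1 h
    · exact absurd rfl hxy
  · intro h
    exact ⟨A, by simp, B, by simp, hAB, h⟩

lemma nsep_decomp (C : Finset (ℝ × ℝ)) (P Q R : ℝ × ℝ) (hR : R ∈ C)
    (hPR : P ≠ R) (hQR : Q ≠ R)
    (D : Finset (ℝ × ℝ)) (hD : ∀ x, x ∈ D ↔ x ∈ C ∧ x ≠ P ∧ x ≠ Q ∧ x ≠ R)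
    (X0 : Finset (Finset (ℝ × ℝ)))
    (hX0 : ∀ s, s ∈ X0 ↔ s ⊆ C ∧ s.card = 2 ∧ P ∉ s ∧ Q ∉ s ∧ R ∉ s) :
    (nsep C P Q : ZMod 2)
      = (∑ B ∈ D, if SepLine R B P Q then 1 else 0)
        + ∑ s ∈ X0, (if (∃ A ∈ s, ∃ B ∈ s, A ≠ B ∧ SepLine A B P Q) then 1 else 0) := by
  classical
  set Y := ((C \ {P, Q}).powersetCard 2).filter
      (fun s => ∃ A ∈ s, ∃ B ∈ s, A ≠ B ∧ SepLine A B P Q) with hY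
  have hcard : nsep C P Q
      = (Y.filter (fun s => R ∈ s)).card + (Y.filter (fun s => R ∉ s)).card := by
    rw [nsep, ← Finset.card_filter_add_card_filter_not (p := fun s => R ∈ s)]
  have h1 : Y.filter (fun s => R ∈ s)
      = (D.filter (fun B => SepLine R B P Q)).image (fun B => insert R ({B} : Finset (ℝ × ℝ))) := by
    ext s
    simp only [hY, Finset.mem_filter, Finset.mem_powersetCard, Finset.mem_image]
    constructor
    · rintro ⟨⟨⟨hsub, hcard2⟩, hsep⟩, hRs⟩
      obtain ⟨a, b, hab, rfl⟩ := Finset.card_eq_two.1 hcard2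
      have ha : a ∈ C \ {P, Q} := hsub (by simp)
      have hb : b ∈ C \ {P, Q} := hsub (by simp)
      simp only [Finset.mem_sdiff, Finset.mem_insert, Finset.mem_singleton] at ha hb
      rcases Finset.mem_insert.1 hRs with rfl | hRb
      · refine ⟨b, ⟨(hD b).2 ⟨hb.1, fun h => hb.2 (Or.inl h),
          fun h => hb.2 (Or.inr h), fun h => hab h.symm⟩, ?_⟩, rfl⟩
        exact (sep2_pair R b P Q hab).1 hsep
      · have hRb' : R = b := Finset.mem_singleton.1 hRb
        subst hRb'
        refine ⟨a, ⟨(hD a).2 ⟨ha.1, fun h => ha.2 (Or.inl h),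
          fun h => ha.2 (Or.inr h), hab⟩, ?_⟩, ?_⟩
        · exact (sepLine_comm _ _ P Q).1 ((sep2_pair a R P Q hab).1 hsep)
        · exact (Finset.pair_comm R a)
    · rintro ⟨B, hB, rfl⟩
      obtain ⟨hBD, hsep⟩ := hB
      obtain ⟨hBC, hBP, hBQ, hBR⟩ := (hD B).1 hBD
      have hRB : R ≠ B := fun h => hBR h.symm
      refine ⟨⟨⟨?_, ?_⟩, ?_⟩, by simp⟩
      · intro x hx
        simp only [Finset.mem_insert, Finset.mem_singleton] at hx
        rcases hx with rfl | rfl <;>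
          simp only [Finset.mem_sdiff, Finset.mem_insert, Finset.mem_singleton]
        · refine ⟨hR, ?_⟩
          rintro (h | h)
          exacts [hPR h.symm, hQR h.symm]
        · exact ⟨hBC, by tauto⟩
      · rw [Finset.card_insert_of_notMem (by simpa using hRB), Finset.card_singleton]
      · exact (sep2_pair R B P Q hRB).2 hsep
  have h2 : Y.filter (fun s => R ∉ s)
      = X0.filter (fun s => ∃ A ∈ s, ∃ B ∈ s, A ≠ B ∧ SepLine A B P Q) := by
    ext s
    simp only [hY, Finset.mem_filter, Finset.mem_powersetCard, hX0, Finset.subset_sdiff,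
      Finset.disjoint_insert_right, Finset.disjoint_singleton_right]
    tauto
  have hinj : Set.InjOn (fun B => insert R ({B} : Finset (ℝ × ℝ)))
      (D.filter (fun B => SepLine R B P Q)) := by
    intro x hx y hy hxy
    simp only [Finset.coe_filter, Set.mem_setOf_eq] at hx hy
    have hxR : x ≠ R := ((hD x).1 hx.1).2.2.2
    have hxy' : insert R ({x} : Finset (ℝ × ℝ)) = insert R {y} := hxy
    have : x ∈ insert R ({y} : Finset (ℝ × ℝ)) := by rw [← hxy']; simp
    simpa [hxR] using this
  rw [hcard]
  push_cast
  rw [h1, h2, Finset.card_image_of_injOn hinj, Finset.card_filter, Finset.card_filter]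
  push_cast
  ring

lemma even_pair {C : Finset (ℝ × ℝ)} (hC : Generic C) {Pi Pj Pk : ℝ × ℝ}
    (hi : Pi ∈ C) (hj : Pj ∈ C) (hk : Pk ∈ C) (s : Finset (ℝ × ℝ))
    (hs : s ⊆ C) (h2 : s.card = 2) (hPi : Pi ∉ s) (hPj : Pj ∉ s) (hPk : Pk ∉ s) :
    ((if (∃ A ∈ s, ∃ B ∈ s, A ≠ B ∧ SepLine A B Pi Pj) then 1 else 0) +
     (if (∃ A ∈ s, ∃ B ∈ s, A ≠ B ∧ SepLine A B Pj Pk) then 1 else 0) +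
     (if (∃ A ∈ s, ∃ B ∈ s, A ≠ B ∧ SepLine A B Pi Pk) then 1 else 0) : ZMod 2) = 0 := by
  obtain ⟨A, B, hAB, rfl⟩ := Finset.card_eq_two.1 h2
  have hA : A ∈ C := hs (by simp)
  have hB : B ∈ C := hs (by simp)
  have hAi : A ≠ Pi := fun h => hPi (h ▸ by simp)
  have hAj : A ≠ Pj := fun h => hPj (h ▸ by simp)
  have hAk : A ≠ Pk := fun h => hPk (h ▸ by simp)
  have hBi : B ≠ Pi := fun h => hPi (h ▸ by simp)
  have hBj : B ≠ Pj := fun h => hPj (h ▸ by simp)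
  have hBk : B ≠ Pk := fun h => hPk (h ▸ by simp)
  rw [if_congr ((sep2_pair A B Pi Pj hAB).trans Iff.rfl) rfl rfl,
      if_congr ((sep2_pair A B Pj Pk hAB).trans Iff.rfl) rfl rfl,
      if_congr ((sep2_pair A B Pi Pk hAB).trans Iff.rfl) rfl rfl]
  exact evenA _ _ _ (det2_ne_zero hC hA hB hi hAB hAi hBi)
    (det2_ne_zero hC hA hB hj hAB hAj hBj) (det2_ne_zero hC hA hB hk hAB hAk hBk)

lemma point_odd {C : Finset (ℝ × ℝ)} (hC : Generic C) {Pi Pj Pk B : ℝ × ℝ}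
    (hi : Pi ∈ C) (hj : Pj ∈ C) (hk : Pk ∈ C) (hB : B ∈ C)
    (hij : Pi ≠ Pj) (hik : Pi ≠ Pk) (hjk : Pj ≠ Pk)
    (hBi : B ≠ Pi) (hBj : B ≠ Pj) (hBk : B ≠ Pk) :
    ((if SepLine Pk B Pi Pj then 1 else 0) + (if SepLine Pi B Pj Pk then 1 else 0) +
     (if SepLine Pj B Pi Pk then 1 else 0) : ZMod 2) = 1 := by
  set a := det2 (Pi - B) (Pj - B) with ha'
  set b := det2 (Pj - B) (Pk - B) with hb'
  set c := det2 (Pk - B) (Pi - B) with hc'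
  have ha : a ≠ 0 := det2_ne_zero hC hB hi hj hBi hBj hij
  have hb : b ≠ 0 := det2_ne_zero hC hB hj hk hBj hBk hjk
  have hc : c ≠ 0 := det2_ne_zero hC hB hk hi hBk hBi hik.symm
  have e1 : SepLine Pk B Pi Pj ↔ 0 < b * c := by
    rw [sepLine_comm]
    show det2 (Pk - B) (Pi - B) * det2 (Pk - B) (Pj - B) < 0 ↔ _
    rw [det2_swap (Pk - B) (Pj - B), ← hb', ← hc', mul_neg, neg_lt_zero, mul_comm]
  have e2 : SepLine Pi B Pj Pk ↔ 0 < a * c := by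
    rw [sepLine_comm]
    show det2 (Pi - B) (Pj - B) * det2 (Pi - B) (Pk - B) < 0 ↔ _
    rw [det2_swap (Pi - B) (Pk - B), ← ha', ← hc', mul_neg, neg_lt_zero]
  have e3 : SepLine Pj B Pi Pk ↔ 0 < a * b := by
    rw [sepLine_comm]
    show det2 (Pj - B) (Pi - B) * det2 (Pj - B) (Pk - B) < 0 ↔ _
    rw [det2_swap (Pj - B) (Pi - B), ← ha', ← hb', neg_mul, neg_lt_zero]
  rw [if_congr e1 rfl rfl, if_congr e2 rfl rfl, if_congr e3 rfl rfl]
  have := oddB a b c ha hb hc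
  linear_combination this


/-- For any three distinct points of a generic configuration of `n` points,
`n(P_i,P_j) + n(P_j,P_k) + n(P_i,P_k) ≡ n - 3 (mod 2)`; in particular the number
of pairs among them violating the Orchard congruence is even. -/
theorem nsep_triple_parity (C : Finset (ℝ × ℝ)) (hC : Generic C)
    (Pi Pj Pk : ℝ × ℝ) (hi : Pi ∈ C) (hj : Pj ∈ C) (hk : Pk ∈ C)
    (hij : Pi ≠ Pj) (hik : Pi ≠ Pk) (hjk : Pj ≠ Pk) :
    ((nsep C Pi Pj + nsep C Pj Pk + nsep C Pi Pk : ℕ) : ℤ) ≡ (C.card : ℤ) - 3 [ZMOD 2] ∧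
    Even (((if ¬ Orchard C Pi Pj then 1 else 0) +
           (if ¬ Orchard C Pj Pk then 1 else 0) +
           (if ¬ Orchard C Pi Pk then 1 else 0) : ℕ)) := by
  classical
  set D : Finset (ℝ × ℝ) := C \ {Pi, Pj, Pk} with hDdef
  set X0 : Finset (Finset (ℝ × ℝ)) :=
    (C.powersetCard 2).filter (fun s => Pi ∉ s ∧ Pj ∉ s ∧ Pk ∉ s) with hX0def
  have hD : ∀ x, x ∈ D ↔ x ∈ C ∧ x ≠ Pi ∧ x ≠ Pj ∧ x ≠ Pk := by
    intro x
    simp only [hDdef, Finset.mem_sdiff, Finset.mem_insert, Finset.mem_singleton]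
    tauto
  have hX0 : ∀ s, s ∈ X0 ↔ s ⊆ C ∧ s.card = 2 ∧ Pi ∉ s ∧ Pj ∉ s ∧ Pk ∉ s := by
    intro s
    simp only [hX0def, Finset.mem_filter, Finset.mem_powersetCard]
    tauto
  have d1 := nsep_decomp C Pi Pj Pk hk hik hjk D hD X0 hX0
  have d2 := nsep_decomp C Pj Pk Pi hi hij.symm hik.symm D
    (fun x => (hD x).trans (by tauto)) X0 (fun s => (hX0 s).trans (by tauto))
  have d3 := nsep_decomp C Pi Pk Pj hj hij hjk.symm D
    (fun x => (hD x).trans (by tauto)) X0 (fun s => (hX0 s).trans (by tauto))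
  have hDsum : (∑ B ∈ D, if SepLine Pk B Pi Pj then (1 : ZMod 2) else 0)
      + (∑ B ∈ D, if SepLine Pi B Pj Pk then (1 : ZMod 2) else 0)
      + (∑ B ∈ D, if SepLine Pj B Pi Pk then (1 : ZMod 2) else 0) = (D.card : ZMod 2) := by
    rw [← Finset.sum_add_distrib, ← Finset.sum_add_distrib]
    rw [Finset.sum_congr rfl (fun B hB => ?_), Finset.sum_const, nsmul_eq_mul, mul_one]
    obtain ⟨hBC, hBi, hBj, hBk⟩ := (hD B).1 hB
    exact point_odd hC hi hj hk hBC hij hik hjk hBi hBj hBk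
  have hX0sum :
      (∑ s ∈ X0, if (∃ A ∈ s, ∃ B ∈ s, A ≠ B ∧ SepLine A B Pi Pj) then (1 : ZMod 2) else 0)
      + (∑ s ∈ X0, if (∃ A ∈ s, ∃ B ∈ s, A ≠ B ∧ SepLine A B Pj Pk) then (1 : ZMod 2) else 0)
      + (∑ s ∈ X0, if (∃ A ∈ s, ∃ B ∈ s, A ≠ B ∧ SepLine A B Pi Pk) then (1 : ZMod 2) else 0)
        = 0 := by
    rw [← Finset.sum_add_distrib, ← Finset.sum_add_distrib]
    rw [Finset.sum_congr rfl (fun s hs => ?_), Finset.sum_const_zero]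
    obtain ⟨hsC, hs2, hsi, hsj, hsk⟩ := (hX0 s).1 hs
    exact even_pair hC hi hj hk s hsC hs2 hsi hsj hsk
  have hT : ({Pi, Pj, Pk} : Finset (ℝ × ℝ)) ⊆ C := by
    simp [Finset.insert_subset_iff, hi, hj, hk]
  have hT3 : ({Pi, Pj, Pk} : Finset (ℝ × ℝ)).card = 3 := by
    rw [Finset.card_insert_of_notMem (by simp [hij, hik]),
      Finset.card_insert_of_notMem (by simp [hjk]), Finset.card_singleton]
  have hDcard : D.card = C.card - 3 := by rw [hDdef, Finset.card_sdiff_of_subset hT, hT3]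
  have h3n : 3 ≤ C.card := hT3 ▸ Finset.card_le_card hT
  have hmain : ((nsep C Pi Pj + nsep C Pj Pk + nsep C Pi Pk : ℕ) : ZMod 2)
      = (D.card : ZMod 2) := by
    push_cast
    rw [d1, d2, d3]
    linear_combination hDsum + hX0sum
  have c1 : ((nsep C Pi Pj + nsep C Pj Pk + nsep C Pi Pk : ℕ) : ZMod 2)
      = (C.card : ZMod 2) - 3 := by
    rw [hmain, hDcard, Nat.cast_sub h3n]
    norm_num
  have horch : ∀ P Q : ℝ × ℝ, (Orchard C P Q ↔
      ((nsep C P Q : ℕ) : ZMod 2) = (C.card : ZMod 2) - 3) := by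
    intro P Q
    constructor
    · intro h
      have h' := (ZMod.intCast_eq_intCast_iff (nsep C P Q : ℤ) ((C.card : ℤ) - 3) 2).2 h
      push_cast at h'
      exact h'
    · intro h
      refine (ZMod.intCast_eq_intCast_iff (nsep C P Q : ℤ) ((C.card : ℤ) - 3) 2).1 ?_
      push_cast
      exact h
  constructor
  · refine (ZMod.intCast_eq_intCast_iff _ _ 2).1 ?_
    have := c1
    push_cast at this ⊢
    linear_combination this
  · set t : ZMod 2 := (C.card : ZMod 2) - 3 with ht
    have hε : ∀ P Q : ℝ × ℝ, ((if ¬ Orchard C P Q then 1 else 0 : ℕ) : ZMod 2)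
        = ((nsep C P Q : ℕ) : ZMod 2) - t := by
      intro P Q
      by_cases h : Orchard C P Q
      · rw [if_neg (not_not_intro h), (horch P Q).1 h]
        simp
      · rw [if_pos h, Nat.cast_one]
        have hne : ((nsep C P Q : ℕ) : ZMod 2) - t ≠ 0 := by
          intro h0
          exact h ((horch P Q).2 (by linear_combination h0))
        have hall : ∀ x : ZMod 2, x ≠ 0 → x = 1 := by decide
        exact (hall _ hne).symm
    have h2 : (2 : ZMod 2) = 0 := rfl
    have hE : (((if ¬ Orchard C Pi Pj then 1 else 0) +
           (if ¬ Orchard C Pj Pk then 1 else 0) +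
           (if ¬ Orchard C Pi Pk then 1 else 0) : ℕ) : ZMod 2) = 0 := by
      rw [Nat.cast_add, Nat.cast_add, hε Pi Pj, hε Pj Pk, hε Pi Pk]
      have := c1
      push_cast at this
      linear_combination this - t * h2
    rw [Nat.even_iff, ← Nat.dvd_iff_mod_eq_zero]
    exact (ZMod.natCast_eq_zero_iff _ 2).1 hE
end
end
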